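/- Conversely, if x* satisfies Σ_j P_j^T W ∇f_j(P_j x*) = 0, then setting v_j* = P_j x* + σ² ∇f_j(P_j x*) for each j yields F_j(v_j*) = P_j x* for all j and x̄(v*) = x*, so v* is a PMACE solution. -/

import Mathlib

open Filter Topology

open Filter Topology

lemma subgrad_ineq {E : Type*} [NormedAddCommGroup E] [InnerProductSpace ℝ E] [CompleteSpace E]
    {f : E → ℝ} (hconv : ConvexOn ℝ Set.univ f) {x g : E}
    (hg : HasGradientAt f g x) (y : E) :
    f x + inner ℝ g (y - x) ≤ f y := by
  set d := y - x with hd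
  have hline : HasDerivAt (fun t : ℝ => f (x + t • d)) (inner ℝ g d) 0 := by
    have h1 : HasDerivAt (fun t : ℝ => x + t • d) d 0 := by
      simpa using ((hasDerivAt_id (0:ℝ)).smul_const d).const_add x
    have h2 : HasFDerivAt f ((InnerProductSpace.toDual ℝ E) g) (x + (0:ℝ) • d) := by
      simpa using hg.hasFDerivAt
    have h3 := h2.comp_hasDerivAt 0 h1
    simp at h3
    exact h3
  have hslope : Tendsto (slope (fun t : ℝ => f (x + t • d)) 0) (𝓝[>] 0)
      (𝓝 (inner ℝ g d)) := by
    have := hasDerivAt_iff_tendsto_slope.1 hline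
    exact this.mono_left (nhdsWithin_mono _ (fun t ht => ne_of_gt ht))
  have hev : ∀ᶠ t in 𝓝[>] (0:ℝ), slope (fun t : ℝ => f (x + t • d)) 0 t ≤ f y - f x := by
    filter_upwards [Ioo_mem_nhdsGT_of_mem (by norm_num : (0:ℝ) ∈ Set.Ico 0 1)] with t ht
    have ht0 : 0 < t := ht.1
    have ht1 : t < 1 := ht.2
    have hc := hconv.2 (Set.mem_univ x) (Set.mem_univ y) (by linarith : (0:ℝ) ≤ 1 - t)
      (le_of_lt ht0) (by ring)
    have hxy : (1 - t) • x + t • y = x + t • d := by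
      simp [hd, smul_sub, sub_smul]; abel
    rw [hxy] at hc
    have : f (x + t • d) - f x ≤ t * (f y - f x) := by
      have : f (x + t • d) ≤ (1 - t) * f x + t * f y := hc
      nlinarith
    simp only [slope, vsub_eq_sub, sub_zero, smul_eq_mul, zero_smul, add_zero]
    rw [inv_mul_le_iff₀ ht0]
    simpa [mul_comm] using this
  have := le_of_tendsto hslope hev
  linarith



set_option maxHeartbeats 1000000

theorem zero_vector_field_gives_pmace_solution
    (J N n : ℕ)
    (P : Fin J → (EuclideanSpace ℝ (Fin N) →L[ℝ] EuclideanSpace ℝ (Fin n)))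
    (hP : ∀ j, (P j).comp (ContinuousLinearMap.adjoint (P j)) = ContinuousLinearMap.id ℝ _)
    (W : EuclideanSpace ℝ (Fin n) →L[ℝ] EuclideanSpace ℝ (Fin n))
    (hWsa : IsSelfAdjoint W)
    (hWpos : ∀ x : EuclideanSpace ℝ (Fin n), x ≠ 0 → (0 : ℝ) < inner ℝ (W x) x)
    (Λ : EuclideanSpace ℝ (Fin N) →L[ℝ] EuclideanSpace ℝ (Fin N))
    (hΛ : ∀ x, Λ x = ∑ j, (ContinuousLinearMap.adjoint (P j)) (W (P j x)))
    (hΛbij : Function.Bijective Λ)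
    (f : Fin J → EuclideanSpace ℝ (Fin n) → ℝ)
    (hconv : ∀ j, ConvexOn ℝ Set.univ (f j))
    (g : Fin J → EuclideanSpace ℝ (Fin n) → EuclideanSpace ℝ (Fin n))
    (hg : ∀ j x, HasGradientAt (f j) (g j x) x)
    (σ : ℝ) (hσ : 0 < σ)
    (F : Fin J → EuclideanSpace ℝ (Fin n) → EuclideanSpace ℝ (Fin n))
    (hF : ∀ j v u, f j (F j v) + ‖F j v - v‖ ^ 2 / (2 * σ ^ 2)
            ≤ f j u + ‖u - v‖ ^ 2 / (2 * σ ^ 2))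
    (xs : EuclideanSpace ℝ (Fin N))
    (hzero : ∑ j, (ContinuousLinearMap.adjoint (P j)) (W (g j (P j xs))) = 0)
    (v : Fin J → EuclideanSpace ℝ (Fin n))
    (hv : ∀ j, v j = P j xs + σ ^ 2 • g j (P j xs)) :
    (∀ j, F j (v j) = P j xs) ∧
      Λ xs = ∑ j, (ContinuousLinearMap.adjoint (P j)) (W (v j)) := by
  constructor
  · intro j
    have hvj : v j = P j xs + σ ^ 2 • g j (P j xs) := hv j
    set x₀ := P j xs with hx₀
    set G := g j x₀ with hG
    set u := F j (v j) with hu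
    have h1 := hF j (v j) x₀
    have h2 := subgrad_ineq (hconv j) (hg j x₀) u
    have e1 : u - v j = (u - x₀) - σ ^ 2 • G := by rw [hvj]; abel
    have e2 : x₀ - v j = -(σ ^ 2 • G) := by rw [hvj]; abel
    have hn1 : ‖u - v j‖ ^ 2
        = ‖u - x₀‖ ^ 2 - 2 * (σ ^ 2 * inner ℝ G (u - x₀)) + (σ ^ 2) ^ 2 * ‖G‖ ^ 2 := by
      rw [e1, norm_sub_sq_real, real_inner_smul_right, real_inner_comm, norm_smul]
      rw [mul_pow, Real.norm_eq_abs, sq_abs]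
      try ring
    have hn2 : ‖x₀ - v j‖ ^ 2 = (σ ^ 2) ^ 2 * ‖G‖ ^ 2 := by
      rw [e2, norm_neg, norm_smul, mul_pow, Real.norm_eq_abs, sq_abs]
    have hσ2 : (0:ℝ) < 2 * σ ^ 2 := by positivity
    have h1' : f j u * (2 * σ ^ 2) + ‖u - v j‖ ^ 2
        ≤ f j x₀ * (2 * σ ^ 2) + ‖x₀ - v j‖ ^ 2 := by
      have := mul_le_mul_of_nonneg_right h1 hσ2.le
      rw [add_mul, add_mul, div_mul_cancel₀ _ hσ2.ne'] at this
      rwa [div_mul_cancel₀ _ hσ2.ne'] at this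
    have h2' : inner ℝ G (u - x₀) ≤ f j u - f j x₀ := by
      have hs : u - x₀ = u - x₀ := rfl
      linarith [h2]
    have hle : ‖u - x₀‖ ^ 2 ≤ 0 := by nlinarith [h1', h2', hσ2]
    have hz : ‖u - x₀‖ = 0 := by nlinarith [norm_nonneg (u - x₀)]
    have := sub_eq_zero.mp (norm_eq_zero.mp hz)
    exact this
  · have hsum : ∑ j, (ContinuousLinearMap.adjoint (P j)) (W (v j))
        = ∑ j, (ContinuousLinearMap.adjoint (P j)) (W (P j xs))
          + σ ^ 2 • ∑ j, (ContinuousLinearMap.adjoint (P j)) (W (g j (P j xs))) := by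
      rw [Finset.smul_sum, ← Finset.sum_add_distrib]
      refine Finset.sum_congr rfl fun j _ => ?_
      rw [hv j, map_add, map_smul, map_add, map_smul]
    rw [hsum, hzero, smul_zero, add_zero, hΛ]
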